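/- With B as above, for any σ ∈ S_{2n} the product Π_{i=1}^{2n} B(i,σ(i)) (taken in increasing order of i) equals (Π_{i=1}^n A(i,π(i))) · e if σ = ρ(π) for some π ∈ S_n, and equals 0 otherwise. -/
import Mathlib


private lemma ofFn_eq_map_range {α : Type*} (n : ℕ) (f : Fin n → α) (g : ℕ → α)
    (hfg : ∀ i : Fin n, g i.val = f i) : List.ofFn f = (List.range n).map g := by
  apply List.ext_getElem
  · simp
  · intro i h1 h2
    simp only [List.getElem_ofFn, List.getElem_map, List.getElem_range]
    exact (hfg _).symm

private lemma prod_map_range_two_mul {M : Type*} [Monoid M] (g : ℕ → M) :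
    ∀ n, ((List.range (2*n)).map g).prod
      = ((List.range n).map (fun i => g (2*i) * g (2*i+1))).prod
  | 0 => by simp
  | (n+1) => by
    have h2 : 2*(n+1) = (2*n+1)+1 := by ring
    rw [h2, List.range_succ, List.range_succ, List.range_succ,
        List.map_append, List.map_append, List.map_append,
        List.prod_append, List.prod_append, List.prod_append,
        prod_map_range_two_mul g n]
    simp [mul_assoc]

private lemma prod_map_smul_e {R : Type*} [Ring R] [Algebra ℝ R] (e : R)
    (he : e * e = e) (a : ℕ → ℝ) :
    ∀ m, ((List.range (m+1)).map (fun i => a i • e)).prod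
      = ((List.range (m+1)).map a).prod • e
  | 0 => by simp [List.range_succ]
  | (m+1) => by
    rw [List.range_succ, List.map_append, List.map_append, List.prod_append,
        List.prod_append, prod_map_smul_e e he a m]
    simp [smul_mul_smul_comm, he, smul_smul, mul_comm]


/-- `σ ∈ S_{2n}` is the interleaving `ρ(π)` of `π ∈ S_n`. -/
def Interleaves (n : ℕ) (π : Equiv.Perm (Fin n)) (σ : Equiv.Perm (Fin (2 * n))) : Prop :=
  ∀ i : Fin n,
    σ ⟨2 * i.val, by have := i.isLt; omega⟩ =
      ⟨(π i).val, by have := (π i).isLt; omega⟩ ∧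
    σ ⟨2 * i.val + 1, by have := i.isLt; omega⟩ =
      ⟨n + (π i).val, by have := (π i).isLt; omega⟩

/-- In a (possibly noncommutative) real algebra, with `h_j h'_j = e` (`e` idempotent,
commuting with the `h_j`) and `h_j h'_k = 0` for `j ≠ k`, and `B` the `2n × 2n` matrix
with `B(2i-1,j) = A(i,j) h_j` (`j ≤ n`), `B(2i-1,j) = 0` (`j > n`), `B(2i,n+j) = h'_j`,
`B(2i,j) = 0` (`j ≤ n`): for any `σ ∈ S_{2n}`, the ordered product
`Π_{i=1}^{2n} B(i,σ(i))` equals `(Π_{i=1}^n A(i,π(i))) · e` if `σ = ρ(π)` for some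
`π ∈ S_n`, and equals `0` otherwise. -/
theorem ordered_product_of_interleave {R : Type*} [Ring R] [Algebra ℝ R]
    (n : ℕ) (hn : 0 < n) (h h' : Fin n → R) (e : R)
    (hprod : ∀ j, h j * h' j = e)
    (hzero : ∀ j k, j ≠ k → h j * h' k = 0)
    (hcomm : ∀ j, e * h j = h j * e)
    (hidem : e * e = e)
    (A : Matrix (Fin n) (Fin n) ℝ)
    (B : Matrix (Fin (2 * n)) (Fin (2 * n)) R)
    (hB1 : ∀ (i j : Fin n), B ⟨2 * i.val, by have := i.isLt; omega⟩
        ⟨j.val, by have := j.isLt; omega⟩ = A i j • h j)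
    (hB2 : ∀ (i j : Fin n), B ⟨2 * i.val, by have := i.isLt; omega⟩
        ⟨n + j.val, by have := j.isLt; omega⟩ = 0)
    (hB3 : ∀ (i j : Fin n), B ⟨2 * i.val + 1, by have := i.isLt; omega⟩
        ⟨n + j.val, by have := j.isLt; omega⟩ = h' j)
    (hB4 : ∀ (i j : Fin n), B ⟨2 * i.val + 1, by have := i.isLt; omega⟩
        ⟨j.val, by have := j.isLt; omega⟩ = 0)
    (σ : Equiv.Perm (Fin (2 * n))) :
    (∀ π : Equiv.Perm (Fin n), Interleaves n π σ →
      (List.ofFn fun i : Fin (2 * n) => B i (σ i)).prod = (∏ i : Fin n, A i (π i)) • e) ∧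
    ((¬ ∃ π : Equiv.Perm (Fin n), Interleaves n π σ) →
      (List.ofFn fun i : Fin (2 * n) => B i (σ i)).prod = 0) := by
  classical
  set g : ℕ → R := fun i => if hi : i < 2*n then B ⟨i, hi⟩ (σ ⟨i, hi⟩) else 1 with hg
  have hofn : (List.ofFn fun i : Fin (2*n) => B i (σ i)) = (List.range (2*n)).map g := by
    apply ofFn_eq_map_range
    intro i
    simp only [hg, dif_pos i.isLt, Fin.eta]
  have h2i : ∀ i : Fin n, 2*i.val < 2*n := fun i => by have := i.isLt; omega
  have h2i1 : ∀ i : Fin n, 2*i.val+1 < 2*n := fun i => by have := i.isLt; omega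
  have hgpair : ∀ i : Fin n, g (2*i.val) * g (2*i.val+1)
      = B ⟨2*i.val, h2i i⟩ (σ ⟨2*i.val, h2i i⟩) *
        B ⟨2*i.val+1, h2i1 i⟩ (σ ⟨2*i.val+1, h2i1 i⟩) := by
    intro i
    simp only [hg, dif_pos (h2i i), dif_pos (h2i1 i)]
  constructor
  · -- the interleaving case
    intro π hπ
    have hpair : ∀ i : Fin n, g (2*i.val) * g (2*i.val+1) = A i (π i) • e := by
      intro i
      rw [hgpair i, (hπ i).1, (hπ i).2, hB1 i (π i), hB3 i (π i),
          smul_mul_assoc, hprod]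
    set a : ℕ → ℝ := fun i => if hi : i < n then A ⟨i, hi⟩ (π ⟨i, hi⟩) else 1 with ha
    have hmap : ((List.range n).map (fun i => g (2*i) * g (2*i+1)))
        = (List.range n).map (fun i => a i • e) := by
      apply List.map_congr_left
      intro i hi
      rw [List.mem_range] at hi
      have := hpair ⟨i, hi⟩
      simp only [ha, dif_pos hi]
      exact this
    obtain ⟨m, rfl⟩ : ∃ m, n = m + 1 := ⟨n - 1, by omega⟩
    rw [hofn, prod_map_range_two_mul, hmap, prod_map_smul_e e hidem a m]
    congr 1
    rw [← ofFn_eq_map_range (m+1) (fun i : Fin (m+1) => A i (π i)) a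
      (fun i => by simp only [ha, dif_pos i.isLt, Fin.eta])]
    exact List.prod_ofFn
  · -- the non-interleaving case
    intro hno
    by_contra hne
    rw [hofn, prod_map_range_two_mul] at hne
    have hP : ∀ i : Fin n, g (2*i.val) * g (2*i.val+1) ≠ 0 := by
      intro i h0
      apply hne
      apply List.prod_eq_zero
      rw [List.mem_map]
      exact ⟨i.val, by rw [List.mem_range]; exact i.isLt, h0⟩
    have hcond : ∀ i : Fin n, (σ ⟨2*i.val, h2i i⟩).val < n ∧
        (σ ⟨2*i.val+1, h2i1 i⟩).val = n + (σ ⟨2*i.val, h2i i⟩).val := by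
      intro i
      have hPi := hP i
      rw [hgpair i] at hPi
      set j := σ ⟨2*i.val, h2i i⟩ with hj
      set k := σ ⟨2*i.val+1, h2i1 i⟩ with hk
      have hjn : j.val < n := by
        by_contra hc
        apply hPi
        have hj0 : B ⟨2*i.val, h2i i⟩ j = 0 := by
          have h3 := hB2 i ⟨j.val - n, by have := j.isLt; omega⟩
          have heq : (⟨n + (j.val - n), by have := j.isLt; omega⟩ : Fin (2*n)) = j :=
            Fin.ext (by simp; omega)
          rwa [heq] at h3
        rw [hj0, zero_mul]
      have hkn : n ≤ k.val := by
        by_contra hc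
        push_neg at hc
        apply hPi
        have hk0 : B ⟨2*i.val+1, h2i1 i⟩ k = 0 := by
          have h3 := hB4 i ⟨k.val, hc⟩
          have heq : (⟨k.val, by have := k.isLt; omega⟩ : Fin (2*n)) = k := Fin.eta _ _
          rwa [heq] at h3
        rw [hk0, mul_zero]
      refine ⟨hjn, ?_⟩
      by_contra hc
      apply hPi
      have hj1 : B ⟨2*i.val, h2i i⟩ j = A i ⟨j.val, hjn⟩ • h ⟨j.val, hjn⟩ := by
        have h3 := hB1 i ⟨j.val, hjn⟩
        have heq : (⟨j.val, by have := j.isLt; omega⟩ : Fin (2*n)) = j := Fin.eta _ _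
        rwa [heq] at h3
      have hk1 : B ⟨2*i.val+1, h2i1 i⟩ k = h' ⟨k.val - n, by have := k.isLt; omega⟩ := by
        have h3 := hB3 i ⟨k.val - n, by have := k.isLt; omega⟩
        have heq : (⟨n + (k.val - n), by have := k.isLt; omega⟩ : Fin (2*n)) = k :=
          Fin.ext (by simp; omega)
        rwa [heq] at h3
      rw [hj1, hk1, smul_mul_assoc,
          hzero ⟨j.val, hjn⟩ ⟨k.val - n, by have := k.isLt; omega⟩
            (by intro hcc; apply hc; have := congrArg Fin.val hcc; simp at this; omega),
          smul_zero]
    apply hno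
    have hinj : Function.Injective (fun i : Fin n => (⟨(σ ⟨2*i.val, h2i i⟩).val, (hcond i).1⟩ : Fin n)) := by
      intro i i' hii
      simp only [Fin.mk.injEq] at hii
      have h2 : σ ⟨2*i.val, h2i i⟩ = σ ⟨2*i'.val, h2i i'⟩ := Fin.ext hii
      have h3 := σ.injective h2
      have h4 : 2*i.val = 2*i'.val := congrArg Fin.val h3
      exact Fin.ext (by omega)
    set π := Equiv.ofBijective _ (Finite.injective_iff_bijective.mp hinj) with hπdef
    refine ⟨π, fun i => ?_⟩
    have hπi : π i = ⟨(σ ⟨2*i.val, h2i i⟩).val, (hcond i).1⟩ := Equiv.ofBijective_apply _ _ i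
    constructor
    · refine Fin.ext ?_
      show (σ ⟨2*i.val, h2i i⟩).val = (π i).val
      rw [hπi]
    · refine Fin.ext ?_
      show (σ ⟨2*i.val+1, h2i1 i⟩).val = n + (π i).val
      rw [hπi]
      exact (hcond i).2
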